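/- Suppose lim_{n→∞} ℱ(n+1)/ℱ(n) = γ with γ ∈ (0,1), and let G and G̃ be two admissible extensions of ℱ, with x_n and x̃_n the unique solutions of G(x_n) = 1/n and G̃(x̃_n) = 1/n respectively. Then x_n − x̃_n → 0 as n → ∞. -/

import Mathlib

open MeasureTheory ProbabilityTheory Filter

/-- An admissible extension of the tail `ℱ : ℕ → ℝ` of a discrete distribution:
a positive, continuous, strictly decreasing, log-convex function on `[0,∞)`
tending to `0` at `+∞` and agreeing with `ℱ` on the integers. -/
structure AdmissibleExt (Ftail : ℕ → ℝ) : Type where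
  G : ℝ → ℝ
  pos : ∀ x ∈ Set.Ici (0 : ℝ), 0 < G x
  cont : ContinuousOn G (Set.Ici 0)
  anti : StrictAntiOn G (Set.Ici 0)
  logConvex : ConvexOn ℝ (Set.Ici 0) fun x => Real.log (G x)
  tendsto_zero : Tendsto G atTop (nhds 0)
  agrees : ∀ n : ℕ, G n = Ftail n

namespace AdmissibleExt

variable {Ftail : ℕ → ℝ}

lemma agrees' (E : AdmissibleExt Ftail) (k : ℕ) (y : ℝ) (h : (k : ℝ) = y) :
    E.G y = Ftail k := by rw [← h, E.agrees]

/-- `G b ≤ G a` for `0 ≤ a ≤ b`. -/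
lemma anti_le (E : AdmissibleExt Ftail) {a b : ℝ} (ha : 0 ≤ a) (hab : a ≤ b) :
    E.G b ≤ E.G a := by
  rcases eq_or_lt_of_le hab with rfl | h
  · exact le_rfl
  · exact (E.anti ha (le_trans ha hab) h).le

/-- chord (upper) bound for `log ∘ G` on `[k+1, k+2]`. -/
lemma chord (E : AdmissibleExt Ftail) (k : ℕ) {y : ℝ}
    (h1 : (k : ℝ) + 1 ≤ y) (h2 : y ≤ (k : ℝ) + 2) :
    Real.log (E.G y) - Real.log (Ftail (k + 1)) ≤
      (Real.log (Ftail (k + 2)) - Real.log (Ftail (k + 1))) * (y - ((k : ℝ) + 1)) := by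
  set t := y - ((k : ℝ) + 1) with ht
  have ht0 : 0 ≤ t := by simp [ht]; linarith
  have ht1 : t ≤ 1 := by simp [ht]; linarith
  have hmem1 : ((k : ℝ) + 1) ∈ Set.Ici (0 : ℝ) := by
    simp only [Set.mem_Ici]; positivity
  have hmem2 : ((k : ℝ) + 2) ∈ Set.Ici (0 : ℝ) := by
    simp only [Set.mem_Ici]; positivity
  have key := E.logConvex.2 hmem1 hmem2 (by linarith : (0:ℝ) ≤ 1 - t) ht0 (by ring)
  have hy : (1 - t) • ((k : ℝ) + 1) + t • ((k : ℝ) + 2) = y := by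
    simp only [smul_eq_mul]; ring
  rw [hy] at key
  have e1 : E.G ((k : ℝ) + 1) = Ftail (k + 1) := E.agrees' (k+1) _ (by push_cast; ring)
  have e2 : E.G ((k : ℝ) + 2) = Ftail (k + 2) := E.agrees' (k+2) _ (by push_cast; ring)
  simp only [smul_eq_mul] at key
  rw [e1, e2] at key
  nlinarith [key]

/-- support (lower) bound for `log ∘ G` on `[k+1, k+2]`. -/
lemma support (E : AdmissibleExt Ftail) (k : ℕ) {y : ℝ}
    (h1 : (k : ℝ) + 1 ≤ y) :
    (Real.log (Ftail (k + 1)) - Real.log (Ftail k)) * (y - ((k : ℝ) + 1)) ≤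
      Real.log (E.G y) - Real.log (Ftail (k + 1)) := by
  have e0 : E.G ((k : ℝ)) = Ftail k := E.agrees' k _ rfl
  have e1 : E.G ((k : ℝ) + 1) = Ftail (k + 1) := E.agrees' (k+1) _ (by push_cast; ring)
  rcases eq_or_lt_of_le h1 with heq | hlt
  · rw [← heq, e1]; simp
  · have hs := E.logConvex.slope_mono_adjacent
      (x := (k : ℝ)) (y := (k : ℝ) + 1) (z := y)
      (Set.mem_Ici.2 k.cast_nonneg)
      (Set.mem_Ici.2 (le_trans (by positivity) h1))
      (by linarith) hlt
    rw [e0, e1] at hs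
    have hd : ((k : ℝ) + 1 - k) = 1 := by ring
    rw [hd, div_one, le_div_iff₀ (by linarith : (0:ℝ) < y - ((k:ℝ)+1))] at hs
    linarith

end AdmissibleExt

/-- **Lemma (independence of the extension).** If `ℱ(n+1)/ℱ(n) → γ ∈ (0,1)` and `G`, `G̃`
are two admissible extensions of the tail `ℱ`, with `xₙ`, `x̃ₙ` the unique solutions of
`G(xₙ) = 1/n`, `G̃(x̃ₙ) = 1/n`, then `xₙ − x̃ₙ → 0`. -/
theorem sub_solutions_tendsto_zero_of_two_extensions
    (Ftail : ℕ → ℝ) (hpos : ∀ t : ℕ, 0 < Ftail t) (hle : ∀ t : ℕ, Ftail t ≤ 1)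
    (γ : ℝ) (hγ0 : 0 < γ) (hγ1 : γ < 1)
    (hγ : Tendsto (fun t : ℕ => Ftail (t + 1) / Ftail t) atTop (nhds γ))
    (E E' : AdmissibleExt Ftail)
    (x : ℕ → ℝ) (hx0 : ∀ n, 2 ≤ n → 0 ≤ x n)
    (hx : ∀ n, 2 ≤ n → E.G (x n) = 1 / n)
    (x' : ℕ → ℝ) (hx'0 : ∀ n, 2 ≤ n → 0 ≤ x' n)
    (hx' : ∀ n, 2 ≤ n → E'.G (x' n) = 1 / n) :
    Tendsto (fun n => x n - x' n) atTop (nhds 0) := by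
  set s : ℕ → ℝ := fun k => Real.log (Ftail (k + 1)) - Real.log (Ftail k) with hsdef
  have hlogγ : Real.log γ < 0 := Real.log_neg hγ0 hγ1
  have hsneg : ∀ k : ℕ, s k < 0 := by
    intro k
    have h1 : E.G ((k : ℝ)) = Ftail k := E.agrees' k _ rfl
    have h2 : E.G ((k : ℝ) + 1) = Ftail (k + 1) := E.agrees' (k + 1) _ (by push_cast; ring)
    have hlt := E.anti (Set.mem_Ici.2 k.cast_nonneg)
      (Set.mem_Ici.2 (by positivity : (0:ℝ) ≤ (k : ℝ) + 1))
      (by linarith [k.cast_nonneg (α := ℝ)] : (k : ℝ) < (k : ℝ) + 1)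
    rw [h1, h2] at hlt
    have := Real.log_lt_log (hpos (k + 1)) hlt
    simp only [hsdef]
    linarith
  have hslog : Tendsto s atTop (nhds (Real.log γ)) := by
    have h := ((Real.continuousAt_log hγ0.ne').tendsto).comp hγ
    exact h.congr fun k => by
      simp only [Function.comp_apply, hsdef]
      rw [Real.log_div (hpos _).ne' (hpos _).ne']
  have hxtop : ∀ C : ℝ, 0 ≤ C → ∀ᶠ n in atTop, C < x n := by
    intro C hC
    have hGC : 0 < E.G C := E.pos C (Set.mem_Ici.2 hC)
    have h1 : ∀ᶠ n : ℕ in atTop, (1:ℝ)/n < E.G C :=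
      tendsto_one_div_atTop_nhds_zero_nat.eventually (gt_mem_nhds hGC)
    filter_upwards [h1, eventually_ge_atTop 2] with n hn h2
    by_contra hcon
    push_neg at hcon
    have := E.anti_le (hx0 n h2) hcon
    rw [hx n h2] at this
    linarith
  have hmtop : Tendsto (fun n => ⌊x n⌋₊) atTop atTop := by
    rw [tendsto_atTop]
    intro b
    filter_upwards [hxtop b b.cast_nonneg] with n hn
    exact Nat.le_floor hn.le
  set B : ℕ → ℝ := fun n => (s (⌊x n⌋₊) - s (⌊x n⌋₊ - 1)) / (-(s (⌊x n⌋₊))) with hBdef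
  have hB : Tendsto B atTop (nhds 0) := by
    have h1 : Tendsto (fun n => s (⌊x n⌋₊)) atTop (nhds (Real.log γ)) := hslog.comp hmtop
    have h2 : Tendsto (fun n => s (⌊x n⌋₊ - 1)) atTop (nhds (Real.log γ)) :=
      hslog.comp ((tendsto_sub_atTop_nat 1).comp hmtop)
    have h3 := (h1.sub h2).div h1.neg (neg_ne_zero.2 (ne_of_lt hlogγ))
    rw [sub_self (Real.log γ), zero_div] at h3
    exact h3
  rw [tendsto_zero_iff_abs_tendsto_zero]
  refine squeeze_zero' (Eventually.of_forall fun n => abs_nonneg _) ?_ hB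
  filter_upwards [hmtop.eventually_ge_atTop 1, eventually_ge_atTop 2] with n hm1 hn2
  show |x n - x' n| ≤ B n
  obtain ⟨k, hk⟩ : ∃ k, ⌊x n⌋₊ = k + 1 := ⟨⌊x n⌋₊ - 1, (Nat.succ_pred_eq_of_pos hm1).symm⟩
  have hxn0 := hx0 n hn2
  have hx'n0 := hx'0 n hn2
  have hfl : ((k : ℝ) + 1) ≤ x n := by
    have h := Nat.floor_le hxn0
    rw [hk] at h; push_cast at h; linarith
  have hfu : x n < (k : ℝ) + 2 := by
    have h := Nat.lt_floor_add_one (x n)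
    rw [hk] at h; push_cast at h; linarith
  have hk0 : (0:ℝ) ≤ (k : ℝ) := k.cast_nonneg
  have e1 : E.G ((k : ℝ) + 1) = Ftail (k + 1) := E.agrees' (k + 1) _ (by push_cast; ring)
  have e2 : E.G ((k : ℝ) + 2) = Ftail (k + 2) := E.agrees' (k + 2) _ (by push_cast; ring)
  have e1' : E'.G ((k : ℝ) + 1) = Ftail (k + 1) := E'.agrees' (k + 1) _ (by push_cast; ring)
  have e2' : E'.G ((k : ℝ) + 2) = Ftail (k + 2) := E'.agrees' (k + 2) _ (by push_cast; ring)
  have hfl' : ((k : ℝ) + 1) ≤ x' n := by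
    by_contra hcon
    push_neg at hcon
    have h1 : E'.G ((k : ℝ) + 1) < E'.G (x' n) :=
      E'.anti (Set.mem_Ici.2 hx'n0) (Set.mem_Ici.2 (by linarith)) hcon
    have h2 : E.G (x n) ≤ E.G ((k : ℝ) + 1) := E.anti_le (by linarith) hfl
    rw [hx n hn2, e1] at h2
    rw [hx' n hn2, e1'] at h1
    linarith
  have hfu' : x' n ≤ (k : ℝ) + 2 := by
    by_contra hcon
    push_neg at hcon
    have h1 : E'.G (x' n) < E'.G ((k : ℝ) + 2) :=
      E'.anti (Set.mem_Ici.2 (by linarith)) (Set.mem_Ici.2 hx'n0) hcon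
    have h2 : E.G ((k : ℝ) + 2) ≤ E.G (x n) := E.anti_le hxn0 hfu.le
    rw [hx n hn2, e2] at h2
    rw [hx' n hn2, e2'] at h1
    linarith
  -- chord / support bounds at x n and x' n
  have cUB : Real.log (1/(n:ℝ)) - Real.log (Ftail (k+1)) ≤
      (Real.log (Ftail (k+2)) - Real.log (Ftail (k+1))) * (x n - ((k:ℝ)+1)) := by
    have h := E.chord k hfl hfu.le
    rwa [hx n hn2] at h
  have cLB : (Real.log (Ftail (k+1)) - Real.log (Ftail k)) * (x n - ((k:ℝ)+1)) ≤
      Real.log (1/(n:ℝ)) - Real.log (Ftail (k+1)) := by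
    have h := E.support k hfl
    rwa [hx n hn2] at h
  have cUB' : Real.log (1/(n:ℝ)) - Real.log (Ftail (k+1)) ≤
      (Real.log (Ftail (k+2)) - Real.log (Ftail (k+1))) * (x' n - ((k:ℝ)+1)) := by
    have h := E'.chord k hfl' hfu'
    rwa [hx' n hn2] at h
  have cLB' : (Real.log (Ftail (k+1)) - Real.log (Ftail k)) * (x' n - ((k:ℝ)+1)) ≤
      Real.log (1/(n:ℝ)) - Real.log (Ftail (k+1)) := by
    have h := E'.support k hfl'
    rwa [hx' n hn2] at h
  have hab : Real.log (Ftail (k+1)) - Real.log (Ftail k) ≤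
      Real.log (Ftail (k+2)) - Real.log (Ftail (k+1)) := by
    have h := E.support k (y := (k:ℝ) + 2) (by linarith)
    rw [e2] at h
    have h2 : ((k:ℝ) + 2 - ((k:ℝ) + 1)) = 1 := by ring
    rw [h2, mul_one] at h
    exact h
  have hbneg : Real.log (Ftail (k+2)) - Real.log (Ftail (k+1)) < 0 := by
    have h := hsneg (k + 1)
    simp only [hsdef] at h
    have hk2 : k + 1 + 1 = k + 2 := by omega
    rw [hk2] at h
    exact h
  have hBn : B n = (Real.log (Ftail (k+2)) - Real.log (Ftail (k+1)) -
      (Real.log (Ftail (k+1)) - Real.log (Ftail k))) /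
      (-(Real.log (Ftail (k+2)) - Real.log (Ftail (k+1)))) := by
    simp only [hBdef, hk, hsdef]
    have hk2 : k + 1 + 1 = k + 2 := by omega
    have hk1 : k + 1 - 1 = k := by omega
    rw [hk2, hk1]
  rw [hBn, abs_sub_le_iff]
  constructor
  · rw [le_div_iff₀ (by linarith : (0:ℝ) < -(Real.log (Ftail (k+2)) - Real.log (Ftail (k+1))))]
    nlinarith [mul_nonneg (show (0:ℝ) ≤ ((k:ℝ)+2) - x' n by linarith)
      (show (0:ℝ) ≤ (Real.log (Ftail (k+2)) - Real.log (Ftail (k+1))) -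
        (Real.log (Ftail (k+1)) - Real.log (Ftail k)) by linarith)]
  · rw [le_div_iff₀ (by linarith : (0:ℝ) < -(Real.log (Ftail (k+2)) - Real.log (Ftail (k+1))))]
    nlinarith [mul_nonneg (show (0:ℝ) ≤ ((k:ℝ)+2) - x n by linarith)
      (show (0:ℝ) ≤ (Real.log (Ftail (k+2)) - Real.log (Ftail (k+1))) -
        (Real.log (Ftail (k+1)) - Real.log (Ftail k)) by linarith)]
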